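/- Multiplication by (2z+1) preserves nonnegativity of h*-coefficients: if f is a polynomial of degree d whose h*-polynomial (with respect to degree d) has nonnegative coefficients, then (2z+1)·f has h*-polynomial (with respect to degree d+1) with nonnegative coefficients. Specifically, the operation maps the basis term t^n/(1-t)^{d+1} to ((2(d-n)+1)t^{n+1} + (2n+1)t^n)/(1-t)^{d+2}. -/

import Mathlib

open Polynomial

lemma shift_aux (f : ℝ[X]) : PowerSeries.mk (fun k : ℕ => f.eval (k:ℝ)) * (1 - PowerSeries.X)
    = PowerSeries.X * PowerSeries.mk (fun k : ℕ => (taylor 1 f - f).eval (k:ℝ))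
      + PowerSeries.C (f.eval 0) := by
  ext m
  cases m with
  | zero =>
    simp [mul_sub, map_sub, PowerSeries.coeff_zero_eq_constantCoeff]
  | succ n =>
    rw [mul_sub, mul_one, map_sub, map_add, mul_comm (PowerSeries.X) _,
      PowerSeries.coeff_succ_mul_X, PowerSeries.coeff_C]
    simp [taylor_eval]

lemma diff_deg (f : ℝ[X]) (d : ℕ) (hf : f.natDegree ≤ d + 1) :
    (taylor (1:ℝ) f - f).natDegree ≤ d := by
  by_cases h0 : f.natDegree = 0
  · obtain ⟨c, rfl⟩ := Polynomial.natDegree_eq_zero.mp h0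
    simp
  by_cases hq : taylor (1:ℝ) f - f = 0
  · simp [hq]
  have hne : f ≠ 0 := fun h => h0 (by simp [h])
  have hXC : (Polynomial.X + 1 : ℝ[X]) = Polynomial.X + Polynomial.C 1 := by simp
  have htne : taylor (1:ℝ) f ≠ 0 := fun h => hne (taylor_injective (1:ℝ) (by simpa using h))
  have hdeg : (taylor (1:ℝ) f).degree = f.degree := by
    rw [Polynomial.degree_eq_natDegree hne, Polynomial.degree_eq_natDegree htne, natDegree_taylor]
  have hlc : (taylor (1:ℝ) f).leadingCoeff = f.leadingCoeff := by
    rw [taylor_apply, Polynomial.leadingCoeff_comp (by rw [Polynomial.natDegree_X_add_C]; omega)]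
    simp [hXC, (Polynomial.monic_X_add_C (1:ℝ)).leadingCoeff]
  have hlt := Polynomial.degree_sub_lt hdeg htne hlc
  rw [hdeg, Polynomial.degree_eq_natDegree hne, ← Polynomial.natDegree_lt_iff_degree_lt hq] at hlt
  omega

lemma hstar_deg : ∀ (d : ℕ) (f : ℝ[X]), f.natDegree ≤ d → ∀ m, d < m →
    PowerSeries.coeff m
      (PowerSeries.mk (fun k : ℕ => f.eval (k:ℝ)) * (1 - PowerSeries.X)^(d+1)) = 0 := by
  intro d
  induction d with
  | zero =>
    intro f hf m hm
    rw [pow_one, shift_aux]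
    obtain ⟨c, rfl⟩ := Polynomial.natDegree_eq_zero.mp (Nat.le_zero.mp hf)
    obtain ⟨n, rfl⟩ := Nat.exists_eq_add_of_lt hm
    simp [PowerSeries.coeff_C]
  | succ d ih =>
    intro f hf m hm
    have : (1 - PowerSeries.X : PowerSeries ℝ)^(d+1+1) = (1 - PowerSeries.X) * (1 - PowerSeries.X)^(d+1) := by
      ring
    rw [this, ← mul_assoc, shift_aux, add_mul, map_add]
    obtain ⟨n, rfl⟩ := Nat.exists_eq_add_of_lt hm
    have h1 : PowerSeries.coeff (d + 1 + n + 1)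
        (PowerSeries.X * PowerSeries.mk (fun k : ℕ => ((taylor 1 f - f).eval (k:ℝ))) *
          (1 - PowerSeries.X)^(d+1)) = 0 := by
      rw [mul_assoc, mul_comm (PowerSeries.X) _, PowerSeries.coeff_succ_mul_X]
      exact ih _ (diff_deg f d hf) _ (by omega)
    rw [h1, zero_add]
    have h2 : (PowerSeries.C (f.eval 0)) * (1 - PowerSeries.X)^(d+1)
        = ((Polynomial.C (f.eval 0) * (1 - Polynomial.X)^(d+1) : ℝ[X]) : PowerSeries ℝ) := by
      rw [Polynomial.coe_mul, Polynomial.coe_pow, Polynomial.coe_sub, Polynomial.coe_one,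
        Polynomial.coe_X, Polynomial.coe_C]
    rw [h2, Polynomial.coeff_coe]
    apply Polynomial.coeff_eq_zero_of_natDegree_lt
    calc (Polynomial.C (f.eval 0) * (1 - Polynomial.X)^(d+1) : ℝ[X]).natDegree
        ≤ (Polynomial.C (f.eval 0) : ℝ[X]).natDegree + ((1 - Polynomial.X : ℝ[X])^(d+1)).natDegree :=
          Polynomial.natDegree_mul_le
      _ ≤ 0 + (d+1) * (1 - Polynomial.X : ℝ[X]).natDegree := by
          gcongr
          · simp
          · exact Polynomial.natDegree_pow_le
      _ < d + 1 + n + 1 := by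
          have : (1 - Polynomial.X : ℝ[X]).natDegree ≤ 1 := by
            apply Polynomial.natDegree_sub_le_iff_left _ |>.mpr <;> simp
          nlinarith

lemma step1 (g : ℕ → ℝ) : PowerSeries.mk (fun k : ℕ => (2*(k:ℝ)+1) * g k)
    = 2 * (PowerSeries.X * PowerSeries.derivative ℝ (PowerSeries.mk g)) + PowerSeries.mk g := by
  ext m
  cases m with
  | zero =>
    simp [PowerSeries.coeff_zero_eq_constantCoeff]
  | succ n =>
    rw [map_add, two_mul, map_add, mul_comm (PowerSeries.X) _, PowerSeries.coeff_succ_mul_X,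
      PowerSeries.coeff_derivative]
    simp only [PowerSeries.coeff_mk]
    push_cast
    ring

lemma key (d : ℕ) (g : ℕ → ℝ) :
    PowerSeries.mk (fun k : ℕ => (2*(k:ℝ)+1) * g k) * (1 - PowerSeries.X)^(d+2)
    = 2 * PowerSeries.X * (1 - PowerSeries.X) *
        (PowerSeries.derivative ℝ (PowerSeries.mk g * (1 - PowerSeries.X)^(d+1)))
      + (PowerSeries.C (2*(d:ℝ)+1) * PowerSeries.X + 1) *
        (PowerSeries.mk g * (1 - PowerSeries.X)^(d+1)) := by
  set A := PowerSeries.mk g with hA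
  set S : PowerSeries ℝ := 1 - PowerSeries.X with hS
  have hDS : PowerSeries.derivative ℝ S = -1 := by
    rw [hS, map_sub, Derivation.map_one_eq_zero, PowerSeries.derivative_X]
    simp
  have hDpow : PowerSeries.derivative ℝ (S^(d+1)) = -((d+1 : ℕ) • S^d) := by
    rw [Derivation.leibniz_pow, hDS]
    simp [smul_smul]
  have hleib : PowerSeries.derivative ℝ (A * S^(d+1)) = A * (-((d+1:ℕ) • S^d)) + S^(d+1) * (PowerSeries.derivative ℝ A) := by
    rw [Derivation.leibniz, hDpow, smul_eq_mul, smul_eq_mul]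
  rw [step1, hleib]
  have hcast : (PowerSeries.C (2*(d:ℝ)+1)) = 2 * ((d:ℕ) : PowerSeries ℝ) + 1 := by
    rw [map_add, map_mul, map_one, map_ofNat, map_natCast]
  rw [hcast]
  have hnsmul : ∀ x : PowerSeries ℝ, (d+1:ℕ) • x = ((d:ℕ) : PowerSeries ℝ) * x + x := by
    intro x
    rw [nsmul_eq_mul]
    push_cast
    ring
  rw [hnsmul]
  have hSpow : S^(d+2) = S * S^(d+1) := by ring
  have hSpow' : S^(d+1) = S * S^d := by ring
  rw [hSpow, hSpow']
  ring

lemma basis (d n : ℕ) (hn : n ≤ d) :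
    PowerSeries.mk (fun k : ℕ => ((k + d - n).choose d : ℝ)) * (1 - PowerSeries.X)^(d+1)
      = (PowerSeries.X : PowerSeries ℝ)^n := by
  have h1 : PowerSeries.mk (fun k : ℕ => ((k + d - n).choose d : ℝ))
      = PowerSeries.X^n * PowerSeries.mk (fun k : ℕ => ((d + k).choose d : ℝ)) := by
    ext k
    rw [PowerSeries.coeff_X_pow_mul']
    split_ifs with hk
    · rw [PowerSeries.coeff_mk, PowerSeries.coeff_mk]
      congr 2
      omega
    · rw [PowerSeries.coeff_mk, Nat.choose_eq_zero_of_lt (by omega), Nat.cast_zero]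
  rw [h1, mul_assoc, PowerSeries.mk_add_choose_mul_one_sub_pow_eq_one, mul_one]

lemma part2 (d n : ℕ) (hn : n ≤ d) :
    PowerSeries.mk (fun k : ℕ => (2*(k:ℝ)+1) * ((Nat.choose (k+d-n) d : ℝ)))
        * (1 - PowerSeries.X)^(d+2)
      = ((Polynomial.C ((2*((d:ℝ)-n)+1)) * Polynomial.X^(n+1)
          + Polynomial.C (2*(n:ℝ)+1) * Polynomial.X^n : ℝ[X]) : PowerSeries ℝ) := by
  rw [key d _, basis d n hn]
  have hD : PowerSeries.derivative ℝ ((PowerSeries.X : PowerSeries ℝ)^n) = (n:ℕ) • (PowerSeries.X : PowerSeries ℝ)^(n-1) := by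
    rw [Derivation.leibniz_pow, PowerSeries.derivative_X]
    simp
  rw [hD, Polynomial.coe_add, Polynomial.coe_mul, Polynomial.coe_mul, Polynomial.coe_pow,
    Polynomial.coe_pow, Polynomial.coe_X, Polynomial.coe_C, Polynomial.coe_C]
  cases n with
  | zero =>
    simp only [Nat.cast_zero, zero_smul, mul_zero, zero_add, pow_zero, pow_one, mul_one]
    rw [map_add, map_mul, map_one, map_ofNat, map_natCast, map_add, map_mul, map_sub,
      map_one, map_ofNat, map_natCast]
    simp only [map_zero]
    ring
  | succ m =>
    rw [nsmul_eq_mul, Nat.succ_sub_one]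
    rw [map_add, map_mul, map_one, map_ofNat, map_natCast, map_add, map_mul, map_sub,
      map_one, map_ofNat, map_natCast, map_add, map_mul, map_one, map_ofNat, map_natCast]
    push_cast
    ring

/-- Multiplication by `2z+1` preserves nonnegativity of h*-coefficients:
if `f` has degree `d` and h*-polynomial `h` (w.r.t. `d`) with nonnegative coefficients, then
`(2z+1)·f` has h*-polynomial (w.r.t. `d+1`) with nonnegative coefficients. Specifically, the
basis term `tⁿ/(1-t)^{d+1}` is mapped to `((2(d-n)+1)t^{n+1} + (2n+1)tⁿ)/(1-t)^{d+2}`. -/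
theorem stmt14 (d : ℕ) (f : Polynomial ℝ) (hdeg : f.natDegree = d)
    (h : Polynomial ℝ)
    (hser : PowerSeries.mk (fun k : ℕ => f.eval (k : ℝ)) * (1 - PowerSeries.X) ^ (d + 1)
      = (h : PowerSeries ℝ))
    (hpos : ∀ i, 0 ≤ h.coeff i)
    (H : Polynomial ℝ)
    (hHser : PowerSeries.mk (fun k : ℕ => (2 * (k : ℝ) + 1) * f.eval (k : ℝ)) *
        (1 - PowerSeries.X) ^ (d + 2) = (H : PowerSeries ℝ)) :
    (∀ i, 0 ≤ H.coeff i) ∧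
    (∀ n ≤ d,
      PowerSeries.mk (fun k : ℕ => (2 * (k : ℝ) + 1) * (Nat.choose (k + d - n) d : ℝ)) *
          (1 - PowerSeries.X) ^ (d + 2)
        = ((C ((2 * ((d : ℝ) - n) + 1)) * X ^ (n + 1) + C (2 * (n : ℝ) + 1) * X ^ n :
            Polynomial ℝ) : PowerSeries ℝ)) := by
  refine ⟨?_, fun n hn => part2 d n hn⟩
  have hz : ∀ m, d < m → h.coeff m = 0 := by
    intro m hm
    have hc := hstar_deg d f (le_of_eq hdeg) m hm
    rwa [hser, Polynomial.coeff_coe] at hc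
  have hkey := key d (fun k : ℕ => f.eval (k:ℝ))
  rw [hser, hHser, PowerSeries.derivative_coe] at hkey
  set P : ℝ[X] := Polynomial.C 2 * Polynomial.X * (1 - Polynomial.X) * Polynomial.derivative h
      + (Polynomial.C (2*(d:ℝ)+1) * Polynomial.X + 1) * h with hPdef
  have hP : (H : PowerSeries ℝ) = (P : PowerSeries ℝ) := by
    rw [hkey, hPdef]
    have coe2 : ((2 : ℝ[X]) : PowerSeries ℝ) = 2 := by
      have h2 : (2 : ℝ[X]) = Polynomial.C 2 := (map_ofNat (Polynomial.C : ℝ →+* ℝ[X]) 2).symm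
      rw [h2, Polynomial.coe_C, map_ofNat]
    simp only [Polynomial.coe_add, Polynomial.coe_mul, Polynomial.coe_sub,
      Polynomial.coe_one, Polynomial.coe_X, Polynomial.coe_C, Polynomial.coe_pow, map_ofNat, coe2]
  have hHP : H = P := (Polynomial.coe_inj).mp hP
  intro i
  rw [hHP]
  have hPe : P = (Polynomial.C 2 * Polynomial.derivative h) * Polynomial.X^1
      - (Polynomial.C 2 * Polynomial.derivative h) * Polynomial.X^2
      + (Polynomial.C (2*(d:ℝ)+1) * h) * Polynomial.X^1 + h := by
    rw [hPdef]; ring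
  rw [hPe]
  simp only [Polynomial.coeff_add, Polynomial.coeff_sub, Polynomial.coeff_mul_X_pow',
    Polynomial.coeff_C_mul, Polynomial.coeff_derivative]
  match i with
  | 0 =>
    norm_num
    exact hpos 0
  | 1 =>
    rw [if_pos (by omega), if_neg (by omega)]
    norm_num
    nlinarith [mul_nonneg (show (0:ℝ) ≤ 2*(d:ℝ)+1 by positivity) (hpos 0), hpos 1]
  | (m+2) =>
    rw [if_pos (by omega), if_pos (by omega)]
    norm_num
    by_cases hmd : d < m + 1
    · rw [hz (m+1) (by omega), hz (m+2) (by omega)]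
      norm_num
    · have hm1 : (m:ℝ) + 1 ≤ (d:ℝ) := by exact_mod_cast Nat.not_lt.mp hmd
      nlinarith [mul_nonneg (show (0:ℝ) ≤ 2*(d:ℝ)-2*(m:ℝ)-1 by linarith) (hpos (m+1)),
        mul_nonneg (show (0:ℝ) ≤ 2*(m:ℝ)+5 by positivity) (hpos (m+2))]
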